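/- Localized quantitative deformation lemma: let E be a Banach space, Φ : E → ℝ continuously Fréchet differentiable, c ∈ ℝ, δ > 0, μ ∈ (0, 1], and η, η̄ with 0 < η̄ < η and 8η̄ ≤ δμ². Let U ⊆ E be nonempty, let U_r := {v ∈ E : dist(v, U) ≤ r} for r > 0, and set N := {u ∈ U_{2δ} : c − η ≤ Φ(u) ≤ c + η}. Assume (i) ‖Φ'(u)‖ ≥ μ for every u ∈ N, and (ii) there exists a locally Lipschitz map V : E → E with ‖V(u)‖ ≤ 2‖Φ'(u)‖ and Φ'(u)(V(u)) ≥ ‖Φ'(u)‖² for every u ∈ N. Then there exists a continuous map F : [0,1] × E → E such that: (1) F(0, u) = u for every u ∈ E; (2) F(t, u) = u for every t ∈ [0,1] whenever u ∉ N; (3) for every u ∈ U with Φ(u) ≤ c + η̄ one has F(1, u) ∈ U_δ and Φ(F(1, u)) ≤ c − η̄; (4) for each t ∈ [0,1] the map F(t, ·) : E → E is a homeomorphism. -/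

import Mathlib

set_option linter.unusedSectionVars false

open Set Metric Filter Real Topology

section FlowTheory

variable {E : Type*} [NormedAddCommGroup E] [NormedSpace ℝ E] [CompleteSpace E]

lemma hasDerivWithinAt_Ici_of_Icc {f : ℝ → E} {v : E} {a b t : ℝ}
    (ht : a ≤ t) (ht' : t < b) (h : HasDerivWithinAt f v (Icc a b) t) :
    HasDerivWithinAt f v (Ici t) t := by
  have h1 : HasDerivWithinAt f v (Icc t b) t := h.mono (Icc_subset_Icc ht le_rfl)
  exact h1.mono_of_mem_nhdsWithin (Icc_mem_nhdsGE ht')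

/-- Uniqueness of solutions of an ODE with locally Lipschitz RHS, forward in time. -/
lemma ode_unique {W : E → E} (hW : LocallyLipschitz W)
    {f g : ℝ → E} {a b : ℝ}
    (hf : ContinuousOn f (Icc a b))
    (hf' : ∀ t ∈ Ico a b, HasDerivWithinAt f (W (f t)) (Ici t) t)
    (hg : ContinuousOn g (Icc a b))
    (hg' : ∀ t ∈ Ico a b, HasDerivWithinAt g (W (g t)) (Ici t) t)
    (hab : f a = g a) : EqOn f g (Icc a b) := by
  rcases le_or_gt b a with hba | hab'
  · intro t ht
    have : t = a := le_antisymm (ht.2.trans hba) ht.1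
    rw [this]; exact hab
  · set S := {t | t ∈ Icc a b ∧ EqOn f g (Icc a t)} with hSdef
    have haS : a ∈ S := ⟨⟨le_rfl, hab'.le⟩, fun u hu => by
      have : u = a := le_antisymm hu.2 hu.1
      rw [this]; exact hab⟩
    have hbdd : BddAbove S := ⟨b, fun t ht => ht.1.2⟩
    have hne : S.Nonempty := ⟨a, haS⟩
    set m := sSup S with hm
    have hmS : m ∈ Icc a b := ⟨le_csSup hbdd haS, csSup_le hne fun t ht => ht.1.2⟩
    have hmEq : EqOn f g (Icc a m) := by
      intro u hu
      rcases eq_or_lt_of_le hu.2 with h | hu2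
      · -- u = m : limit argument
        rcases eq_or_lt_of_le hu.1 with h' | hau
        · rw [← h']; exact hab
        · have hagree : EqOn f g (Ico a u) := by
            intro w hw
            obtain ⟨t, htS, hwt⟩ := exists_lt_of_lt_csSup hne (h ▸ hw.2)
            exact htS.2 ⟨hw.1, hwt.le⟩
          have huab : u ∈ Icc a b := ⟨hu.1, h.le.trans (h ▸ hmS.2 : m ≤ b)⟩
          have hsub : Ico a u ⊆ Icc a b := fun w hw => ⟨hw.1, hw.2.le.trans huab.2⟩
          have hcf : ContinuousWithinAt f (Ico a u) u := (hf u huab).mono hsub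
          have hcg : ContinuousWithinAt g (Ico a u) u := (hg u huab).mono hsub
          have hne' : (𝓝[Ico a u] u).NeBot := by
            have : u ∈ closure (Ico a u) := by
              rw [closure_Ico hau.ne]; exact ⟨hau.le, le_rfl⟩
            exact mem_closure_iff_nhdsWithin_neBot.mp this
          have h1 : Tendsto f (𝓝[Ico a u] u) (𝓝 (f u)) := hcf
          have h2 : Tendsto f (𝓝[Ico a u] u) (𝓝 (g u)) := by
            refine Tendsto.congr' ?_ hcg
            filter_upwards [self_mem_nhdsWithin] with w hw
            exact (hagree hw).symm
          exact tendsto_nhds_unique h1 h2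
      · obtain ⟨t, htS, hut⟩ := exists_lt_of_lt_csSup hne hu2
        exact htS.2 ⟨hu.1, hut.le⟩
    have hmS' : m ∈ S := ⟨hmS, hmEq⟩
    rcases eq_or_lt_of_le hmS.2 with hmb | hmb
    · rw [← hmb]; exact hmEq
    · exfalso
      set y := f m with hy
      obtain ⟨Kl, s, hs, hKl⟩ := hW y
      obtain ⟨r, hr0, hball⟩ := Metric.mem_nhds_iff.mp hs
      have hgm : g m = y := (hmEq ⟨hmS.1, le_rfl⟩).symm
      have hym : y ∈ ball y r := mem_ball_self hr0
      have e1 : ∀ᶠ w in 𝓝[Icc a b] m, f w ∈ ball y r := (hf m hmS).preimage_mem_nhdsWithin (ball_mem_nhds _ hr0)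
      have e2 : ∀ᶠ w in 𝓝[Icc a b] m, g w ∈ ball y r := by
        have := (hg m hmS).preimage_mem_nhdsWithin (ball_mem_nhds (g m) hr0)
        rw [hgm] at this; exact this
      obtain ⟨ε, hε0, hsub⟩ := mem_nhdsWithin_iff.mp (e1.and e2)
      set b' := min b (m + ε/2) with hb'
      have hmb' : m < b' := lt_min hmb (by linarith)
      have hb'le : b' ≤ b := min_le_left _ _
      have hIsub : Icc m b' ⊆ Icc a b := Icc_subset_Icc hmS.1 hb'le
      have hIsub' : ∀ w ∈ Ico m b', w ∈ ball m ε ∩ Icc a b := by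
        intro w hw
        refine ⟨?_, hIsub ⟨hw.1, hw.2.le⟩⟩
        rw [mem_ball, Real.dist_eq, abs_of_nonneg (by linarith [hw.1] : (0:ℝ) ≤ w - m)]
        have : w < m + ε/2 := lt_of_lt_of_le hw.2 (min_le_right _ _)
        linarith
      have key : EqOn f g (Icc m b') := by
        refine ODE_solution_unique_of_mem_Icc_right (v := fun _ => W)
          (s := fun _ => ball y r) (K := Kl) (fun _ _ => hKl.mono hball)
          (hf.mono hIsub) (fun t ht => hf' t ⟨hmS.1.trans ht.1, lt_of_lt_of_le ht.2 hb'le⟩)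
          (fun t ht => (hsub (hIsub' t ht)).1)
          (hg.mono hIsub) (fun t ht => hg' t ⟨hmS.1.trans ht.1, lt_of_lt_of_le ht.2 hb'le⟩)
          (fun t ht => (hsub (hIsub' t ht)).2)
          (hgm ▸ rfl)
      have hb'S : b' ∈ S := by
        refine ⟨⟨hmS.1.trans hmb'.le, hb'le⟩, ?_⟩
        intro w hw
        rcases le_total w m with h | h
        · exact hmEq ⟨hw.1, h⟩
        · exact key ⟨h, hw.2⟩
      exact absurd (le_csSup hbdd hb'S) (not_le.mpr hmb')

/-- Local existence with uniform time for initial data near a given point. -/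
lemma local_exist {W : E → E} {M : ℝ} (hW : LocallyLipschitz W) (hM : 0 < M)
    (hWb : ∀ x, ‖W x‖ ≤ M) (x₀ : E) :
    ∃ ε > (0:ℝ), ∀ x ∈ closedBall x₀ ε, ∀ t₀ : ℝ,
      ∃ f : ℝ → E, f t₀ = x ∧
        ∀ t ∈ Icc (t₀ - ε) (t₀ + ε), HasDerivWithinAt f (W (f t)) (Icc (t₀ - ε) (t₀ + ε)) t := by
  obtain ⟨Kl, s, hs, hKl⟩ := hW x₀
  obtain ⟨r, hr0, hball⟩ := Metric.mem_nhds_iff.mp hs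
  set M' := max M 1 with hM'
  have hM'0 : (0:ℝ) < M' := lt_of_lt_of_le one_pos (le_max_right _ _)
  set ε := r / (4 * M') with hε
  have hε0 : 0 < ε := by positivity
  have hεr : ε ≤ r / 4 := by
    rw [hε]
    calc r / (4 * M') ≤ r / (4 * 1) := by
          gcongr
          all_goals first | exact hr0.le | exact le_max_right M 1 | norm_num
      _ = r / 4 := by norm_num
  refine ⟨ε, hε0, fun x hx t₀ => ?_⟩
  have hsub : closedBall x (r/2) ⊆ ball x₀ r := by
    intro z hz
    rw [mem_closedBall] at hz hx
    rw [mem_ball]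
    calc dist z x₀ ≤ dist z x + dist x x₀ := dist_triangle _ _ _
      _ ≤ r/2 + ε := add_le_add hz hx
      _ ≤ r/2 + r/4 := by linarith
      _ < r := by linarith
  have hpl : IsPicardLindelof (fun _ => W) (tmin := t₀ - ε) (tmax := t₀ + ε)
      ⟨t₀, ⟨by linarith, by linarith⟩⟩ x ⟨r/2, by positivity⟩ 0 ⟨M, hM.le⟩ Kl :=
    IsPicardLindelof.of_time_independent (fun z _ => hWb z) (hKl.mono (hsub.trans hball)) (by
        show M * max (t₀ + ε - t₀) (t₀ - (t₀ - ε)) ≤ r/2 - ((0:NNReal):ℝ)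
        rw [NNReal.coe_zero, sub_zero]
        have h1 : max (t₀ + ε - t₀) (t₀ - (t₀ - ε)) = ε := by
          rw [add_sub_cancel_left, sub_sub_cancel, max_self]
        rw [h1]
        calc M * ε ≤ M' * ε := by
              apply mul_le_mul_of_nonneg_right (le_max_left M 1) hε0.le
          _ = r/4 := by rw [hε]; field_simp
          _ ≤ r/2 := by linarith)
  obtain ⟨f, hf0, hfd⟩ := hpl.exists_eq_forall_mem_Icc_hasDerivWithinAt₀
  exact ⟨f, hf0, hfd⟩

/-- Gluing two solutions at a common time. -/
lemma glue_sol {W : E → E} {f h : ℝ → E} {a b c : ℝ} (hab : a ≤ b) (hbc : b ≤ c)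
    (hf : ∀ t ∈ Icc a b, HasDerivWithinAt f (W (f t)) (Icc a b) t)
    (hh : ∀ t ∈ Icc b c, HasDerivWithinAt h (W (h t)) (Icc b c) t)
    (hmatch : f b = h b) :
    ∃ g : ℝ → E, (∀ t ∈ Icc a b, g t = f t) ∧
      ∀ t ∈ Icc a c, HasDerivWithinAt g (W (g t)) (Icc a c) t := by
  classical
  set g : ℝ → E := fun t => if t ≤ b then f t else h t with hgdef
  have hgf : ∀ u ∈ Icc a b, g u = f u := fun u hu => if_pos hu.2
  have hgh : ∀ u ∈ Icc b c, g u = h u := by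
    intro u hu
    rcases eq_or_lt_of_le hu.1 with h' | hbu
    · rw [← h']; simp [hgdef, hmatch]
    · simp [hgdef, not_le.mpr hbu]
  refine ⟨g, hgf, ?_⟩
  intro t ht
  rcases lt_trichotomy t b with htb | heq | hbt
  · have htab : t ∈ Icc a b := ⟨ht.1, htb.le⟩
    have h1 : HasDerivWithinAt g (W (g t)) (Icc a b) t := by
      rw [hgf t htab]
      exact (hf t htab).congr hgf (hgf t htab)
    have hmem : Icc a b ∈ 𝓝[Icc a c] t := by
      have h2 : Icc a c ∩ Iic b ∈ 𝓝[Icc a c] t := inter_mem_nhdsWithin _ (Iic_mem_nhds htb)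
      have h3 : Icc a c ∩ Iic b = Icc a b := by
        ext u
        simp only [mem_inter_iff, mem_Icc, mem_Iic]
        constructor
        · rintro ⟨⟨h1', _⟩, h3'⟩; exact ⟨h1', h3'⟩
        · rintro ⟨h1', h2'⟩; exact ⟨⟨h1', h2'.trans hbc⟩, h2'⟩
      rwa [h3] at h2
    exact h1.mono_of_mem_nhdsWithin hmem
  · subst heq
    have hab2 : t ∈ Icc a t := ⟨ht.1, le_rfl⟩
    have hbc2 : t ∈ Icc t c := ⟨le_rfl, ht.2⟩
    have hab3 : t ∈ Icc a t := hab2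
    have hgb : g t = f t := hgf t hab2
    have h1 : HasDerivWithinAt g (W (g t)) (Icc a t) t := by
      rw [hgb]; exact (hf t hab2).congr hgf hgb
    have h2 : HasDerivWithinAt g (W (g t)) (Icc t c) t := by
      have hgb2 : g t = h t := hgh t hbc2
      rw [hgb2]; exact (hh t hbc2).congr hgh hgb2
    have h3 := h1.union h2
    rwa [Icc_union_Icc_eq_Icc ht.1 ht.2] at h3
  · have htbc : t ∈ Icc b c := ⟨hbt.le, ht.2⟩
    have h1 : HasDerivWithinAt g (W (g t)) (Icc b c) t := by
      rw [hgh t htbc]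
      exact (hh t htbc).congr hgh (hgh t htbc)
    have hmem : Icc b c ∈ 𝓝[Icc a c] t := by
      have h2 : Icc a c ∩ Ici b ∈ 𝓝[Icc a c] t := inter_mem_nhdsWithin _ (Ici_mem_nhds hbt)
      have h3 : Icc a c ∩ Ici b = Icc b c := by
        ext u
        simp only [mem_inter_iff, mem_Icc, mem_Ici]
        constructor
        · rintro ⟨⟨_, h2'⟩, h3'⟩; exact ⟨h3', h2'⟩
        · rintro ⟨h1', h2'⟩; exact ⟨⟨hab.trans h1', h2'⟩, h1'⟩
      rwa [h3] at h2
    exact h1.mono_of_mem_nhdsWithin hmem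

end FlowTheory

section FlowTheory2

variable {E : Type*} [NormedAddCommGroup E] [NormedSpace ℝ E] [CompleteSpace E]

/-- Solutions are `M`-Lipschitz in time. -/
lemma sol_lip {W : E → E} {M : ℝ} (hWb : ∀ x, ‖W x‖ ≤ M) {f : ℝ → E} {a b : ℝ}
    (hf : ∀ t ∈ Icc a b, HasDerivWithinAt f (W (f t)) (Icc a b) t)
    {s t : ℝ} (hs : s ∈ Icc a b) (ht : t ∈ Icc a b) :
    ‖f t - f s‖ ≤ M * |t - s| := by
  have := Convex.norm_image_sub_le_of_norm_hasDerivWithin_le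
    (f := f) (f' := fun u => W (f u)) (s := Icc a b) (C := M)
    (fun u hu => hf u hu) (fun u hu => hWb (f u)) (convex_Icc a b) hs ht
  rwa [Real.norm_eq_abs] at this

/-- Global existence of solutions on `[0, T]`. -/
lemma global_exist {W : E → E} {M : ℝ} (hW : LocallyLipschitz W) (hM : 0 < M)
    (hWb : ∀ x, ‖W x‖ ≤ M) (x : E) (T : ℝ) (hT : 0 ≤ T) :
    ∃ f : ℝ → E, f 0 = x ∧ ∀ t ∈ Icc (0:ℝ) T, HasDerivWithinAt f (W (f t)) (Icc (0:ℝ) T) t := by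
  by_contra hcon
  set Good : ℝ → Prop := fun T' => ∃ f : ℝ → E, f 0 = x ∧
      ∀ t ∈ Icc (0:ℝ) T', HasDerivWithinAt f (W (f t)) (Icc (0:ℝ) T') t with hGooddef
  have hmono : ∀ T₁ T₂ : ℝ, T₁ ≤ T₂ → Good T₂ → Good T₁ := by
    rintro T₁ T₂ h12 ⟨f, hf0, hfd⟩
    exact ⟨f, hf0, fun t ht => (hfd t ⟨ht.1, ht.2.trans h12⟩).mono (Icc_subset_Icc le_rfl h12)⟩
  -- extension step: from a solution reaching time t₁ with a uniform local solution around
  -- the endpoint, extend to time t₁ + ε.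
  have hext : ∀ t₁ : ℝ, 0 ≤ t₁ → Good t₁ → ∀ ε > (0:ℝ), ∀ y : E,
      (∀ z ∈ closedBall y ε, ∀ t₀ : ℝ, ∃ f : ℝ → E, f t₀ = z ∧
        ∀ t ∈ Icc (t₀ - ε) (t₀ + ε), HasDerivWithinAt f (W (f t)) (Icc (t₀ - ε) (t₀ + ε)) t) →
      (∀ f : ℝ → E, f 0 = x → (∀ t ∈ Icc (0:ℝ) t₁, HasDerivWithinAt f (W (f t)) (Icc (0:ℝ) t₁) t)
        → f t₁ ∈ closedBall y ε) →
      Good (t₁ + ε) := by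
    intro t₁ ht₁ hg ε hε y hloc hend
    obtain ⟨f, hf0, hfd⟩ := hg
    have hfend : f t₁ ∈ closedBall y ε := hend f hf0 hfd
    obtain ⟨fl, hfl0, hfld⟩ := hloc (f t₁) hfend t₁
    have hfld' : ∀ t ∈ Icc t₁ (t₁ + ε), HasDerivWithinAt fl (W (fl t)) (Icc t₁ (t₁ + ε)) t := by
      intro t ht
      exact (hfld t ⟨by linarith [ht.1], ht.2⟩).mono (Icc_subset_Icc (by linarith) le_rfl)
    obtain ⟨g, hgf, hgd⟩ := glue_sol ht₁ (by linarith) hfd hfld' (by rw [hfl0])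
    exact ⟨g, by rw [hgf 0 ⟨le_rfl, ht₁⟩]; exact hf0, hgd⟩
  -- the set of good times
  set S := {T' : ℝ | 0 ≤ T' ∧ T' ≤ T ∧ Good T'} with hSdef
  have hGood0 : Good 0 := by
    obtain ⟨ε, hε0, hloc⟩ := local_exist hW hM hWb x
    obtain ⟨f, hf0, hfd⟩ := hloc x (mem_closedBall_self hε0.le) 0
    refine hmono 0 ε hε0.le ⟨f, hf0, ?_⟩
    intro t ht
    exact (hfd t ⟨by linarith [ht.1], by linarith [ht.2]⟩).mono
      (Icc_subset_Icc (by linarith) (by linarith))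
  have hS0 : (0:ℝ) ∈ S := ⟨le_rfl, hT, hGood0⟩
  have hSne : S.Nonempty := ⟨0, hS0⟩
  have hSb : BddAbove S := ⟨T, fun t ht => ht.2.1⟩
  set m := sSup S with hm
  have hm0 : 0 ≤ m := le_csSup hSb hS0
  have hmT : m ≤ T := csSup_le hSne fun t ht => ht.2.1
  -- endgame helper: a good time beyond m gives a contradiction
  have hbeyond : ∀ T' : ℝ, m < T' → Good T' → False := by
    intro T' hmT' hgT'
    rcases le_total T' T with h | h
    · exact absurd (le_csSup hSb ⟨hm0.trans hmT'.le, h, hgT'⟩) (not_le.mpr hmT')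
    · exact hcon (hmono T T' h hgT')
  by_cases hmS : Good m
  · -- extend directly from time m
    obtain ⟨f₀, hf₀0, hf₀d⟩ := id hmS
    obtain ⟨ε, hε0, hloc⟩ := local_exist hW hM hWb (f₀ m)
    refine hbeyond (m + ε) (by linarith) ?_
    refine hext m hm0 hmS ε hε0 (f₀ m) hloc ?_
    intro f hf0 hfd
    -- any solution on [0, m] ends at f₀ m by uniqueness
    have huniq : EqOn f f₀ (Icc 0 m) := by
      refine ode_unique hW (fun t ht => (hfd t ht).continuousWithinAt)
        (fun t ht => hasDerivWithinAt_Ici_of_Icc ht.1 ht.2 (hfd t ⟨ht.1, ht.2.le⟩))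
        (fun t ht => (hf₀d t ht).continuousWithinAt)
        (fun t ht => hasDerivWithinAt_Ici_of_Icc ht.1 ht.2 (hf₀d t ⟨ht.1, ht.2.le⟩))
        (by rw [hf0, hf₀0])
    rw [huniq ⟨hm0, le_rfl⟩]
    exact mem_closedBall_self hε0.le
  · -- m is a limit of good times; use completeness to find the limit point
    have hmpos : 0 < m := by
      rcases eq_or_lt_of_le hm0 with h | h
      · exact absurd (h ▸ hGood0) hmS
      · exact h
    have hgood_lt : ∀ t : ℝ, 0 ≤ t → t < m → Good t := by
      intro t h0 hlt
      obtain ⟨t', ht'S, htt'⟩ := exists_lt_of_lt_csSup hSne hlt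
      exact hmono t t' htt'.le ht'S.2.2
    -- canonical solutions
    have hchoice : ∀ t : ℝ, 0 ≤ t ∧ t < m → ∃ f : ℝ → E, f 0 = x ∧
        ∀ u ∈ Icc (0:ℝ) t, HasDerivWithinAt f (W (f u)) (Icc (0:ℝ) t) u :=
      fun t h => hgood_lt t h.1 h.2
    classical
    set sol : ∀ t : ℝ, 0 ≤ t ∧ t < m → (ℝ → E) := fun t h => (hchoice t h).choose with hsol
    have hsol0 : ∀ t h, (sol t h) 0 = x := fun t h => (hchoice t h).choose_spec.1
    have hsold : ∀ t h, ∀ u ∈ Icc (0:ℝ) t, HasDerivWithinAt (sol t h) (W (sol t h u)) (Icc (0:ℝ) t) u :=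
      fun t h => (hchoice t h).choose_spec.2
    -- agreement
    have hagree : ∀ t₁ t₂ (h₁ : 0 ≤ t₁ ∧ t₁ < m) (h₂ : 0 ≤ t₂ ∧ t₂ < m), t₁ ≤ t₂ →
        ∀ u ∈ Icc (0:ℝ) t₁, sol t₁ h₁ u = sol t₂ h₂ u := by
      intro t₁ t₂ h₁ h₂ h12 u hu
      refine ode_unique hW
        (fun v hv => ((hsold t₁ h₁) v hv).continuousWithinAt)
        (fun v hv => hasDerivWithinAt_Ici_of_Icc hv.1 hv.2 (hsold t₁ h₁ v ⟨hv.1, hv.2.le⟩))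
        (fun v hv => (((hsold t₂ h₂) v ⟨hv.1, hv.2.trans h12⟩).mono
            (Icc_subset_Icc le_rfl h12)).continuousWithinAt)
        (fun v hv => hasDerivWithinAt_Ici_of_Icc hv.1 (lt_of_lt_of_le hv.2 h12)
            (hsold t₂ h₂ v ⟨hv.1, hv.2.le.trans h12⟩))
        ((hsol0 t₁ h₁).trans (hsol0 t₂ h₂).symm) hu
    -- the limiting trajectory
    set gg : ℝ → E := fun t => if h : 0 ≤ t ∧ t < m then sol t h t else x with hggdef
    have hgg_eq : ∀ t (h : 0 ≤ t ∧ t < m), gg t = sol t h t := by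
      intro t h
      simp only [hggdef]
      rw [dif_pos h]
    have hgg_lip : ∀ s t (hs : 0 ≤ s ∧ s < m) (ht : 0 ≤ t ∧ t < m),
        ‖gg t - gg s‖ ≤ M * |t - s| := by
      intro s t hs ht
      rcases le_total s t with h | h
      · rw [hgg_eq s hs, hgg_eq t ht, hagree s t hs ht h s ⟨hs.1, le_rfl⟩]
        exact sol_lip hWb (hsold t ht) ⟨hs.1, h⟩ ⟨ht.1, le_rfl⟩
      · rw [hgg_eq s hs, hgg_eq t ht, hagree t s ht hs h t ⟨ht.1, le_rfl⟩]
        have := sol_lip hWb (hsold s hs) (s := t) (t := s) ⟨ht.1, h⟩ ⟨hs.1, le_rfl⟩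
        rw [← norm_neg, neg_sub] at this
        rwa [← abs_neg, neg_sub] at this
    -- Cauchy sequence approaching m
    set a : ℕ → ℝ := fun n => m - m / (n + 1) with hadef
    have ha_mem : ∀ n : ℕ, 0 ≤ a n ∧ a n < m := by
      intro n
      constructor
      · have h1 : m / (n + 1) ≤ m / 1 := by
          apply div_le_div_of_nonneg_left hmpos.le one_pos
          exact_mod_cast Nat.succ_le_succ (Nat.zero_le n)
        simp only [div_one] at h1
        simp only [hadef]; linarith
      · have h2 : 0 < m / (n + 1) := by positivity
        simp only [hadef]; linarith
    have ha_tend : Filter.Tendsto a atTop (nhds m) := by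
      have h1 : Filter.Tendsto (fun n : ℕ => m / (n + 1)) atTop (nhds 0) := by
        have := tendsto_one_div_add_atTop_nhds_zero_nat.const_mul m
        simpa [div_eq_mul_inv, mul_comm] using this
      have := Filter.Tendsto.sub (tendsto_const_nhds (x := m) (f := atTop)) h1
      simpa using this
    have hcauchy : CauchySeq (fun n => gg (a n)) := by
      rw [Metric.cauchySeq_iff]
      intro ε hε
      obtain ⟨N, hN⟩ := Metric.cauchySeq_iff.mp ha_tend.cauchySeq (ε / M) (by positivity)
      refine ⟨N, fun p hp q hq => ?_⟩
      have h1 := hgg_lip (a q) (a p) (ha_mem q) (ha_mem p)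
      rw [dist_eq_norm]
      calc ‖gg (a p) - gg (a q)‖ ≤ M * |a p - a q| := h1
        _ < M * (ε / M) := by
            apply mul_lt_mul_of_pos_left _ hM
            rw [← Real.dist_eq]; exact hN p hp q hq
        _ = ε := by field_simp
    obtain ⟨y, hy⟩ := cauchySeq_tendsto_of_complete hcauchy
    -- distance from trajectory to the limit point
    have hdist_y : ∀ t (h : 0 ≤ t ∧ t < m), ‖gg t - y‖ ≤ M * (m - t) := by
      intro t h
      have h1 : Filter.Tendsto (fun n => ‖gg t - gg (a n)‖) atTop (nhds ‖gg t - y‖) :=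
        (Filter.Tendsto.sub tendsto_const_nhds hy).norm
      have h2 : Filter.Tendsto (fun n => M * |t - a n|) atTop (nhds (M * |t - m|)) :=
        ((tendsto_const_nhds.sub ha_tend).abs).const_mul M
      have h3 : M * |t - m| = M * (m - t) := by
        rw [abs_of_nonpos (by linarith [h.2])]; ring
      rw [← h3]
      refine le_of_tendsto_of_tendsto' h1 h2 ?_
      intro n
      exact hgg_lip (a n) t (ha_mem n) h
    -- pick a good time close to m and extend from there
    obtain ⟨ε, hε0, hloc⟩ := local_exist hW hM hWb y
    set t₁ : ℝ := max 0 (m - ε / (M + 1)) with ht₁def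
    have ht₁0 : 0 ≤ t₁ := le_max_left _ _
    have ht₁m : t₁ < m := by
      apply max_lt hmpos
      have : 0 < ε / (M + 1) := by positivity
      linarith
    have hmt₁ : m - t₁ ≤ ε / (M + 1) := by
      have := le_max_right 0 (m - ε / (M + 1))
      linarith
    have hεlt : ε / (M + 1) < ε := by
      rw [div_lt_iff₀ (by linarith)]
      nlinarith
    have ht₁pair : 0 ≤ t₁ ∧ t₁ < m := ⟨ht₁0, ht₁m⟩
    refine hbeyond (t₁ + ε) (by linarith) ?_
    refine hext t₁ ht₁0 (hgood_lt t₁ ht₁0 ht₁m) ε hε0 y hloc ?_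
    intro f hf0 hfd
    have huniq : EqOn f (sol t₁ ht₁pair) (Icc 0 t₁) := by
      refine ode_unique hW (fun t ht => (hfd t ht).continuousWithinAt)
        (fun t ht => hasDerivWithinAt_Ici_of_Icc ht.1 ht.2 (hfd t ⟨ht.1, ht.2.le⟩))
        (fun t ht => ((hsold t₁ ht₁pair) t ht).continuousWithinAt)
        (fun t ht => hasDerivWithinAt_Ici_of_Icc ht.1 ht.2 (hsold t₁ ht₁pair t ⟨ht.1, ht.2.le⟩))
        (hf0.trans (hsol0 t₁ ht₁pair).symm)
    have h4 : f t₁ = gg t₁ := by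
      rw [huniq ⟨ht₁0, le_rfl⟩, hgg_eq t₁ ht₁pair]
    rw [mem_closedBall, dist_eq_norm, h4]
    calc ‖gg t₁ - y‖ ≤ M * (m - t₁) := hdist_y t₁ ht₁pair
      _ ≤ M * (ε / (M + 1)) := mul_le_mul_of_nonneg_left hmt₁ hM.le
      _ ≤ ε := by
          rw [mul_div_assoc']
          rw [div_le_iff₀ (by linarith)]
          nlinarith

end FlowTheory2

section FlowTheory3

variable {E : Type*} [NormedAddCommGroup E] [NormedSpace ℝ E] [CompleteSpace E]

/-- A bounded locally Lipschitz vector field is Lipschitz on a small neighborhood of any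
nonempty compact set. -/
lemma lipschitzOn_tube {W : E → E} {M : ℝ} (hW : LocallyLipschitz W) (hM : 0 < M)
    (hWb : ∀ x, ‖W x‖ ≤ M) {K : Set E} (hK : IsCompact K) (hKne : K.Nonempty) :
    ∃ r > (0:ℝ), ∃ L : NNReal, LipschitzOnWith L W {y | Metric.infDist y K < r} := by
  classical
  choose Kf nb hnb hKf using hW
  have hrad : ∀ p : E, ∃ rp : ℝ, 0 < rp ∧ ball p rp ⊆ nb p := by
    intro p
    obtain ⟨rp, h0, hs⟩ := Metric.mem_nhds_iff.mp (hnb p)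
    exact ⟨rp, h0, hs⟩
  choose rad hrad0 hradsub using hrad
  have hcover : K ⊆ ⋃ p ∈ K, ball p (rad p / 4) := fun p hp =>
    mem_biUnion hp (mem_ball_self (by have := hrad0 p; positivity))
  obtain ⟨b', hb'K, hb'fin, hb'cov⟩ := hK.elim_finite_subcover_image
    (fun p _ => isOpen_ball) hcover
  have hb'ne : b'.Nonempty := by
    rcases hKne with ⟨p, hp⟩
    obtain ⟨q, hq, -⟩ := mem_iUnion₂.mp (hb'cov hp)
    exact ⟨q, hq⟩
  obtain ⟨p₀, hp₀, hdmin⟩ := Set.exists_min_image b' (fun p => rad p / 4) hb'fin hb'ne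
  obtain ⟨p₁, hp₁, hLmax⟩ := Set.exists_max_image b' (fun p => (Kf p : ℝ)) hb'fin hb'ne
  set d := rad p₀ / 4 with hd
  have hd0 : 0 < d := by have := hrad0 p₀; positivity
  set Lc : ℝ := max (Kf p₁ : ℝ) (2 * M / d) with hLc
  have hLc0 : 0 ≤ Lc := le_trans (by positivity) (le_max_right _ _)
  refine ⟨d, hd0, Real.toNNReal Lc, LipschitzOnWith.of_dist_le' ?_⟩
  intro x hx y hy
  rcases le_or_gt d (dist x y) with hbig | hsmall
  · calc dist (W x) (W y) ≤ ‖W x‖ + ‖W y‖ := by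
          rw [dist_eq_norm]; exact norm_sub_le _ _
      _ ≤ 2 * M := by linarith [hWb x, hWb y]
      _ = (2 * M / d) * d := by field_simp
      _ ≤ (2 * M / d) * dist x y := by
          apply mul_le_mul_of_nonneg_left hbig (by positivity)
      _ ≤ Lc * dist x y := by
          apply mul_le_mul_of_nonneg_right (le_max_right _ _) dist_nonneg
  · obtain ⟨p, hpK, hxp⟩ := (infDist_lt_iff hKne).mp hx
    obtain ⟨q, hq, hpq⟩ := mem_iUnion₂.mp (hb'cov hpK)
    rw [mem_ball] at hpq
    have hdq : d ≤ rad q / 4 := hdmin q hq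
    have hxq : dist x q < rad q / 2 := by
      calc dist x q ≤ dist x p + dist p q := dist_triangle _ _ _
        _ < d + rad q / 4 := add_lt_add hxp hpq
        _ ≤ rad q / 4 + rad q / 4 := by linarith
        _ = rad q / 2 := by ring
    have hyq : dist y q < rad q := by
      calc dist y q ≤ dist y x + dist x q := dist_triangle _ _ _
        _ < d + rad q / 2 := by rw [dist_comm]; exact add_lt_add hsmall hxq
        _ ≤ rad q / 4 + rad q / 2 := by linarith
        _ < rad q := by linarith [hrad0 q]
    have hxball : x ∈ nb q := hradsub q (mem_ball.mpr (hxq.trans (by linarith [hrad0 q])))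
    have hyball : y ∈ nb q := hradsub q (mem_ball.mpr hyq)
    calc dist (W x) (W y) ≤ (Kf q : ℝ) * dist x y := (hKf q).dist_le_mul x hxball y hyball
      _ ≤ Lc * dist x y := by
          apply mul_le_mul_of_nonneg_right _ dist_nonneg
          exact le_trans (hLmax q hq) (le_max_left _ _)

end FlowTheory3

section FlowTheory4

variable {E : Type*} [NormedAddCommGroup E] [NormedSpace ℝ E] [CompleteSpace E]

set_option maxHeartbeats 2000000 in
/-- Existence of a continuous semiflow for a bounded locally Lipschitz vector field. -/
theorem exists_flow {W : E → E} {M : ℝ} (hW : LocallyLipschitz W) (hM : 0 < M)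
    (hWb : ∀ x, ‖W x‖ ≤ M) :
    ∃ σ : ℝ → E → E,
      (∀ x, σ 0 x = x) ∧
      (∀ x, ∀ T, 0 ≤ T → ∀ t ∈ Icc (0:ℝ) T,
        HasDerivWithinAt (fun s => σ s x) (W (σ t x)) (Icc (0:ℝ) T) t) ∧
      ContinuousOn (fun p : ℝ × E => σ p.1 p.2) (Ici (0:ℝ) ×ˢ univ) := by
  classical
  have hex := global_exist hW hM hWb
  set σ : ℝ → E → E := fun t x => if h : 0 ≤ t then (hex x t h).choose t else x with hσdef
  -- agreement with each chosen solution
  have hagree : ∀ x T (hT : 0 ≤ T), ∀ t ∈ Icc (0:ℝ) T, σ t x = (hex x T hT).choose t := by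
    intro x T hT t ht
    have h1 : σ t x = (hex x t ht.1).choose t := by
      rw [hσdef]; simp only [ht.1, dif_pos]
    rw [h1]
    have hs1 := (hex x t ht.1).choose_spec
    have hs2 := (hex x T hT).choose_spec
    refine ode_unique hW
      (fun v hv => (hs1.2 v hv).continuousWithinAt)
      (fun v hv => hasDerivWithinAt_Ici_of_Icc hv.1 hv.2 (hs1.2 v ⟨hv.1, hv.2.le⟩))
      (fun v hv => ((hs2.2 v ⟨hv.1, hv.2.trans ht.2⟩).mono
          (Icc_subset_Icc le_rfl ht.2)).continuousWithinAt)
      (fun v hv => hasDerivWithinAt_Ici_of_Icc hv.1 (lt_of_lt_of_le hv.2 ht.2)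
          (hs2.2 v ⟨hv.1, hv.2.le.trans ht.2⟩))
      (hs1.1.trans hs2.1.symm) ⟨ht.1, le_rfl⟩
  have hσ0 : ∀ x, σ 0 x = x := by
    intro x
    rw [hagree x 0 le_rfl 0 ⟨le_rfl, le_rfl⟩]
    exact (hex x 0 le_rfl).choose_spec.1
  have hσd : ∀ x, ∀ T, 0 ≤ T → ∀ t ∈ Icc (0:ℝ) T,
      HasDerivWithinAt (fun s => σ s x) (W (σ t x)) (Icc (0:ℝ) T) t := by
    intro x T hT t ht
    have hs := (hex x T hT).choose_spec
    have heq : ∀ u ∈ Icc (0:ℝ) T, σ u x = (hex x T hT).choose u := hagree x T hT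
    have := (hs.2 t ht).congr (fun u hu => heq u hu) (heq t ht)
    rwa [← heq t ht] at this
  refine ⟨σ, hσ0, hσd, ?_⟩
  -- continuity
  rintro ⟨t₀, x₀⟩ hp
  have ht₀ : (0:ℝ) ≤ t₀ := hp.1
  set T' : ℝ := t₀ + 1 with hT'def
  have hT' : (0:ℝ) ≤ T' := by linarith
  have hctsx₀ : ContinuousOn (fun s => σ s x₀) (Icc 0 T') :=
    fun s hs => (hσd x₀ T' hT' s hs).continuousWithinAt
  set K := (fun s => σ s x₀) '' (Icc 0 T') with hKdef
  have hKcomp : IsCompact K := isCompact_Icc.image_of_continuousOn hctsx₀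
  have hKne : K.Nonempty := ⟨σ 0 x₀, ⟨0, ⟨le_rfl, hT'⟩, rfl⟩⟩
  obtain ⟨r, hr0, L, hL⟩ := lipschitzOn_tube hW hM hWb hKcomp hKne
  set Ω := {y : E | Metric.infDist y K < r} with hΩdef
  -- time Lipschitz bound
  have htime : ∀ z : E, ∀ u ∈ Icc (0:ℝ) T', ∀ v ∈ Icc (0:ℝ) T',
      ‖σ u z - σ v z‖ ≤ M * |u - v| := by
    intro z u hu v hv
    exact sol_lip hWb (hσd z T' hT') hv hu
  -- the key Gronwall estimate
  have key : ∀ ρ : ℝ, 0 < ρ → ρ ≤ r/4 * Real.exp (-((L:ℝ) * T')) → ∀ x ∈ closedBall x₀ ρ,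
      ∀ s ∈ Icc (0:ℝ) T', dist (σ s x) (σ s x₀) ≤ ρ * Real.exp ((L:ℝ) * s) := by
    intro ρ hρ0 hρle x hx
    have hexpT : Real.exp (-((L:ℝ) * T')) ≤ 1 := by
      rw [Real.exp_le_one_iff]
      have : (0:ℝ) ≤ (L:ℝ) * T' := by positivity
      linarith
    have hρr4 : ρ ≤ r/4 := by
      calc ρ ≤ r/4 * Real.exp (-((L:ℝ) * T')) := hρle
        _ ≤ r/4 * 1 := by apply mul_le_mul_of_nonneg_left hexpT (by positivity)
        _ = r/4 := by ring
    set A := {s : ℝ | s ∈ Icc (0:ℝ) T' ∧ ∀ u ∈ Icc (0:ℝ) s, dist (σ u x) (σ u x₀) ≤ r/2}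
      with hAdef
    have h0A : (0:ℝ) ∈ A := by
      refine ⟨⟨le_rfl, hT'⟩, ?_⟩
      intro u hu
      have : u = 0 := le_antisymm hu.2 hu.1
      rw [this, hσ0, hσ0]
      calc dist x x₀ ≤ ρ := mem_closedBall.mp hx
        _ ≤ r/2 := by linarith
    have hAne : A.Nonempty := ⟨0, h0A⟩
    have hAbdd : BddAbove A := ⟨T', fun s hs => hs.1.2⟩
    set s₁ := sSup A with hs₁def
    have hs₁mem : s₁ ∈ Icc (0:ℝ) T' := ⟨le_csSup hAbdd h0A, csSup_le hAne fun s hs => hs.1.2⟩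
    -- closedness of A at s₁
    have hs₁A : s₁ ∈ A := by
      refine ⟨hs₁mem, ?_⟩
      intro u hu
      rcases eq_or_lt_of_le hu.2 with heq | hlt
      · -- u = s₁
        rcases eq_or_lt_of_le hs₁mem.1 with h0s | h0s
        · -- s₁ = 0
          have hu0 : u = 0 := by rw [heq, ← h0s]
          rw [hu0, hσ0, hσ0]
          calc dist x x₀ ≤ ρ := mem_closedBall.mp hx
            _ ≤ r/2 := by linarith
        · refine le_of_forall_pos_le_add ?_
          intro ε' hε'
          set v₀ := max 0 (s₁ - ε' / (2*M+1)) with hv₀def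
          have hv₀lt : v₀ < s₁ := by
            apply max_lt h0s
            have : 0 < ε' / (2*M+1) := by positivity
            linarith
          obtain ⟨v, hvA, hv₀v⟩ := exists_lt_of_lt_csSup hAne hv₀lt
          have hvle : v ≤ s₁ := le_csSup hAbdd hvA
          have hvge : s₁ - ε' / (2*M+1) ≤ v := le_trans (le_max_right _ _) hv₀v.le
          have hv0 : 0 ≤ v := le_trans (le_max_left _ _) hv₀v.le
          have hdv : dist (σ v x) (σ v x₀) ≤ r/2 := hvA.2 v ⟨hv0, le_rfl⟩
          have hvT : v ∈ Icc (0:ℝ) T' := ⟨hv0, hvle.trans hs₁mem.2⟩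
          have huT : u ∈ Icc (0:ℝ) T' := ⟨hu.1, hu.2.trans hs₁mem.2⟩
          have h1 : ‖σ u x - σ v x‖ ≤ M * |u - v| := htime x u huT v hvT
          have h2 : ‖σ u x₀ - σ v x₀‖ ≤ M * |u - v| := htime x₀ u huT v hvT
          have huv : |u - v| ≤ ε' / (2*M+1) := by
            rw [abs_of_nonneg (by rw [heq]; linarith)]
            rw [heq]; linarith
          have h1' : dist (σ u x) (σ v x) ≤ M * |u - v| := by
            rw [dist_eq_norm]; exact h1
          have h2' : dist (σ v x₀) (σ u x₀) ≤ M * |u - v| := by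
            rw [dist_comm, dist_eq_norm]; exact h2
          calc dist (σ u x) (σ u x₀)
              ≤ dist (σ u x) (σ v x) + dist (σ v x) (σ v x₀) + dist (σ v x₀) (σ u x₀) :=
                dist_triangle4 _ _ _ _
            _ ≤ M * |u - v| + r/2 + M * |u - v| :=
                add_le_add (add_le_add h1' hdv) h2'
            _ ≤ r/2 + (2*M) * (ε' / (2*M+1)) := by
                have := mul_le_mul_of_nonneg_left huv hM.le
                nlinarith [abs_nonneg (u - v)]
            _ ≤ r/2 + ε' := by
                have h3 : (2*M) * (ε' / (2*M+1)) ≤ ε' := by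
                  have h8 : (0:ℝ) < 2*M+1 := by linarith
                  have h9 : (2*M) * (ε' / (2*M+1)) = (2*M*ε')/(2*M+1) := by ring
                  rw [h9, div_le_iff₀ h8]
                  nlinarith
                linarith
      · obtain ⟨v, hvA, huv⟩ := exists_lt_of_lt_csSup hAne hlt
        exact hvA.2 u ⟨hu.1, huv.le⟩
    -- Gronwall on [0, s₁]
    have hgron : ∀ u ∈ Icc (0:ℝ) s₁, dist (σ u x) (σ u x₀) ≤ ρ * Real.exp ((L:ℝ) * u) := by
      have h0 : dist (σ 0 x) (σ 0 x₀) ≤ ρ := by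
        rw [hσ0, hσ0]; exact mem_closedBall.mp hx
      have hh := dist_le_of_trajectories_ODE_of_mem (v := fun _ => W) (s := fun _ => Ω)
        (K := L) (fun _ _ => hL)
        (f := fun s => σ s x) (g := fun s => σ s x₀) (a := 0) (b := s₁)
        (fun u hu => ((hσd x T' hT' u ⟨hu.1, hu.2.trans hs₁mem.2⟩).mono
          (Icc_subset_Icc le_rfl hs₁mem.2)).continuousWithinAt)
        (fun u hu => hasDerivWithinAt_Ici_of_Icc hu.1 (lt_of_lt_of_le hu.2 hs₁mem.2)
          (hσd x T' hT' u ⟨hu.1, hu.2.le.trans hs₁mem.2⟩))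
        (fun u hu => ?_)
        (fun u hu => ((hσd x₀ T' hT' u ⟨hu.1, hu.2.trans hs₁mem.2⟩).mono
          (Icc_subset_Icc le_rfl hs₁mem.2)).continuousWithinAt)
        (fun u hu => hasDerivWithinAt_Ici_of_Icc hu.1 (lt_of_lt_of_le hu.2 hs₁mem.2)
          (hσd x₀ T' hT' u ⟨hu.1, hu.2.le.trans hs₁mem.2⟩))
        (fun u hu => ?_) h0
      · intro u hu
        have := hh u hu
        simpa using this
      · -- σ u x ∈ Ω
        have hmem : σ u x₀ ∈ K := ⟨u, ⟨hu.1, hu.2.le.trans hs₁mem.2⟩, rfl⟩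
        have : Metric.infDist (σ u x) K ≤ dist (σ u x) (σ u x₀) :=
          Metric.infDist_le_dist_of_mem hmem
        have h2 : dist (σ u x) (σ u x₀) ≤ r/2 := hs₁A.2 u ⟨hu.1, hu.2.le⟩
        show Metric.infDist (σ u x) K < r
        linarith
      · have hmem : σ u x₀ ∈ K := ⟨u, ⟨hu.1, hu.2.le.trans hs₁mem.2⟩, rfl⟩
        show Metric.infDist (σ u x₀) K < r
        rw [Metric.infDist_zero_of_mem hmem]
        exact hr0
    -- show s₁ = T'
    rcases eq_or_lt_of_le hs₁mem.2 with heq | hlt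
    · intro s hs
      rw [← heq] at hs
      exact hgron s hs
    · exfalso
      set ε' := min (T' - s₁) (r / (8 * (M+1))) with hε'def
      have hε'0 : 0 < ε' := lt_min (by linarith) (by positivity)
      have hs₁ε' : s₁ + ε' ∈ A := by
        refine ⟨⟨by linarith [hs₁mem.1], by
          have := min_le_left (T' - s₁) (r / (8 * (M+1))); linarith⟩, ?_⟩
        intro u hu
        rcases le_or_gt u s₁ with h | h
        · exact hs₁A.2 u ⟨hu.1, h⟩
        · have huT : u ∈ Icc (0:ℝ) T' := ⟨hu.1, by
            have h1 := min_le_left (T' - s₁) (r / (8 * (M+1)))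
            have := hu.2; linarith⟩
          have hs₁T : s₁ ∈ Icc (0:ℝ) T' := hs₁mem
          have h1 : ‖σ u x - σ s₁ x‖ ≤ M * |u - s₁| := htime x u huT s₁ hs₁T
          have h2 : ‖σ u x₀ - σ s₁ x₀‖ ≤ M * |u - s₁| := htime x₀ u huT s₁ hs₁T
          have h3 : dist (σ s₁ x) (σ s₁ x₀) ≤ ρ * Real.exp ((L:ℝ) * s₁) :=
            hgron s₁ ⟨hs₁mem.1, le_rfl⟩
          have h4 : ρ * Real.exp ((L:ℝ) * s₁) ≤ r/4 := by
            calc ρ * Real.exp ((L:ℝ) * s₁)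
                ≤ (r/4 * Real.exp (-((L:ℝ) * T'))) * Real.exp ((L:ℝ) * s₁) := by
                  apply mul_le_mul_of_nonneg_right hρle (Real.exp_nonneg _)
              _ = r/4 * Real.exp ((L:ℝ) * s₁ - (L:ℝ) * T') := by
                  rw [mul_assoc, ← Real.exp_add, neg_add_eq_sub]
              _ ≤ r/4 * 1 := by
                  apply mul_le_mul_of_nonneg_left _ (by positivity)
                  rw [Real.exp_le_one_iff]
                  have h5 : (L:ℝ) * s₁ ≤ (L:ℝ) * T' := by
                    apply mul_le_mul_of_nonneg_left hs₁mem.2 (by positivity)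
                  linarith
              _ = r/4 := by ring
          have huv : |u - s₁| ≤ ε' := by
            rw [abs_of_nonneg (by linarith)]
            linarith [hu.2]
          have hMε' : M * ε' ≤ r / 8 := by
            have h5 : ε' ≤ r / (8 * (M+1)) := min_le_right _ _
            calc M * ε' ≤ M * (r / (8 * (M+1))) := mul_le_mul_of_nonneg_left h5 hM.le
              _ ≤ r / 8 := by
                  have h8 : (0:ℝ) < 8*(M+1) := by positivity
                  have h9 : M * (r / (8*(M+1))) = (M*r)/(8*(M+1)) := by ring
                  rw [h9, div_le_div_iff₀ h8 (by norm_num : (0:ℝ) < 8)]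
                  nlinarith [hr0.le]
          calc dist (σ u x) (σ u x₀)
              ≤ dist (σ u x) (σ s₁ x) + dist (σ s₁ x) (σ s₁ x₀) + dist (σ s₁ x₀) (σ u x₀) :=
                dist_triangle4 _ _ _ _
            _ ≤ M * |u - s₁| + r/4 + M * |u - s₁| := by
                have h1' : dist (σ u x) (σ s₁ x) ≤ M * |u - s₁| := by
                  rw [dist_eq_norm]; exact h1
                have h2' : dist (σ s₁ x₀) (σ u x₀) ≤ M * |u - s₁| := by
                  rw [dist_comm, dist_eq_norm]; exact h2
                exact add_le_add (add_le_add h1' (h3.trans h4)) h2'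
            _ ≤ (M * ε') + r/4 + (M * ε') := by
                have := mul_le_mul_of_nonneg_left huv hM.le
                linarith
            _ ≤ r/2 := by linarith
      have := le_csSup hAbdd hs₁ε'
      linarith
  -- conclude continuity at (t₀, x₀)
  rw [Metric.continuousWithinAt_iff]
  intro ε hε
  set ρ := min (r/4 * Real.exp (-((L:ℝ) * T'))) (ε/4 * Real.exp (-((L:ℝ) * T'))) with hρdef
  have hρ0 : 0 < ρ := lt_min (by positivity) (by positivity)
  set δ := min ρ (min 1 (ε / (2 * (M+1)))) with hδdef
  have hδ0 : 0 < δ := lt_min hρ0 (lt_min one_pos (by positivity))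
  refine ⟨δ, hδ0, ?_⟩
  rintro ⟨t, x⟩ hmem hdist
  have ht : (0:ℝ) ≤ t := hmem.1
  rw [Prod.dist_eq] at hdist
  have hdt : dist t t₀ < δ := lt_of_le_of_lt (le_max_left _ _) hdist
  have hdx : dist x x₀ < δ := lt_of_le_of_lt (le_max_right _ _) hdist
  have htT : t ∈ Icc (0:ℝ) T' := by
    refine ⟨ht, ?_⟩
    have h1 : dist t t₀ < 1 := lt_of_lt_of_le hdt (le_trans (min_le_right _ _) (min_le_left _ _))
    rw [Real.dist_eq] at h1
    have := abs_lt.mp h1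
    rw [hT'def]; linarith [this.1, this.2]
  have ht₀T : t₀ ∈ Icc (0:ℝ) T' := ⟨ht₀, by rw [hT'def]; linarith⟩
  have hxρ : x ∈ closedBall x₀ ρ := by
    rw [mem_closedBall]
    exact le_of_lt (lt_of_lt_of_le hdx (min_le_left _ _))
  have h1 : dist (σ t x) (σ t x₀) ≤ ρ * Real.exp ((L:ℝ) * t) :=
    key ρ hρ0 (min_le_left _ _) x hxρ t htT
  have h2 : ρ * Real.exp ((L:ℝ) * t) ≤ ε/4 := by
    calc ρ * Real.exp ((L:ℝ) * t)
        ≤ (ε/4 * Real.exp (-((L:ℝ) * T'))) * Real.exp ((L:ℝ) * t) := by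
          apply mul_le_mul_of_nonneg_right (min_le_right _ _) (Real.exp_nonneg _)
      _ = ε/4 * Real.exp ((L:ℝ) * t - (L:ℝ) * T') := by
          rw [mul_assoc, ← Real.exp_add, neg_add_eq_sub]
      _ ≤ ε/4 * 1 := by
          apply mul_le_mul_of_nonneg_left _ (by positivity)
          rw [Real.exp_le_one_iff]
          have h5 : (L:ℝ) * t ≤ (L:ℝ) * T' := by
            apply mul_le_mul_of_nonneg_left htT.2 (by positivity)
          linarith
      _ = ε/4 := by ring
  have h3 : ‖σ t x₀ - σ t₀ x₀‖ ≤ M * |t - t₀| := htime x₀ t htT t₀ ht₀T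
  have h4 : M * |t - t₀| < ε/2 := by
    have h5 : |t - t₀| < ε / (2 * (M+1)) := by
      have := lt_of_lt_of_le hdt (le_trans (min_le_right _ _) (min_le_right _ _))
      rwa [Real.dist_eq] at this
    calc M * |t - t₀| ≤ (M+1) * |t - t₀| := by nlinarith [abs_nonneg (t - t₀)]
      _ < (M+1) * (ε / (2 * (M+1))) := by
          apply mul_lt_mul_of_pos_left h5 (by linarith)
      _ = ε/2 := by
          have hM1 : M + 1 ≠ 0 := by positivity
          field_simp
  calc dist (σ t x) (σ t₀ x₀)
      ≤ dist (σ t x) (σ t x₀) + dist (σ t x₀) (σ t₀ x₀) := dist_triangle _ _ _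
    _ ≤ ε/4 + M * |t - t₀| := by
        rw [dist_eq_norm (σ t x₀)]
        exact add_le_add (h1.trans h2) h3
    _ < ε/4 + ε/2 := by linarith
    _ < ε := by linarith

end FlowTheory4

section FlowFacts

variable {E : Type*} [NormedAddCommGroup E] [NormedSpace ℝ E] [CompleteSpace E]
variable {W : E → E} {σ : ℝ → E → E}

/-- Right-derivative of the flow. -/
lemma flow_deriv_Ici
    (hσd : ∀ x, ∀ T, 0 ≤ T → ∀ t ∈ Icc (0:ℝ) T,
      HasDerivWithinAt (fun s => σ s x) (W (σ t x)) (Icc (0:ℝ) T) t)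
    (x : E) {t : ℝ} (ht : 0 ≤ t) :
    HasDerivWithinAt (fun s => σ s x) (W (σ t x)) (Ici t) t :=
  hasDerivWithinAt_Ici_of_Icc ht (lt_add_one t)
    (hσd x (t+1) (by linarith) t ⟨ht, (lt_add_one t).le⟩)

/-- The flow is constant at zeros of the vector field. -/
lemma flow_const (hW : LocallyLipschitz W)
    (hσ0 : ∀ x, σ 0 x = x)
    (hσd : ∀ x, ∀ T, 0 ≤ T → ∀ t ∈ Icc (0:ℝ) T,
      HasDerivWithinAt (fun s => σ s x) (W (σ t x)) (Icc (0:ℝ) T) t)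
    {x : E} (hx : W x = 0) {t : ℝ} (ht : 0 ≤ t) : σ t x = x := by
  have h := ode_unique hW (f := fun s => σ s x) (g := fun _ => x) (a := 0) (b := t)
    (fun u hu => (hσd x t ht u hu).continuousWithinAt)
    (fun u hu => flow_deriv_Ici hσd x hu.1)
    continuousOn_const
    (fun u hu => by
      have : HasDerivWithinAt (fun _ : ℝ => x) 0 (Ici u) u := hasDerivWithinAt_const u _ x
      simpa [hx] using this)
    (hσ0 x)
  exact h ⟨ht, le_rfl⟩

/-- The reverse flow inverts the flow. -/
lemma flow_inverse (hW : LocallyLipschitz W)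
    (hσ0 : ∀ x, σ 0 x = x)
    (hσd : ∀ x, ∀ T, 0 ≤ T → ∀ t ∈ Icc (0:ℝ) T,
      HasDerivWithinAt (fun s => σ s x) (W (σ t x)) (Icc (0:ℝ) T) t)
    {σ' : ℝ → E → E}
    (hσ'0 : ∀ x, σ' 0 x = x)
    (hσ'd : ∀ x, ∀ T, 0 ≤ T → ∀ t ∈ Icc (0:ℝ) T,
      HasDerivWithinAt (fun s => σ' s x) (-W (σ' t x)) (Icc (0:ℝ) T) t)
    (x : E) {t : ℝ} (ht : 0 ≤ t) : σ' t (σ t x) = x := by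
  rcases eq_or_lt_of_le ht with rfl | ht0
  · rw [hσ0, hσ'0]
  · have hWneg : LocallyLipschitz (fun y => -W y) := hW.neg
    have key := ode_unique (W := fun y => -W y) hWneg (a := 0) (b := t)
      (f := fun s => σ (t - s) x) (g := fun s => σ' s (σ t x))
      (by
        have h1 : ContinuousOn (fun s => σ s x) (Icc 0 t) :=
          fun u hu => (hσd x t ht u hu).continuousWithinAt
        have h2 : Continuous (fun s : ℝ => t - s) := continuous_const.sub continuous_id
        exact h1.comp h2.continuousOn (fun s hs => ⟨by linarith [hs.2], by linarith [hs.1]⟩))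
      (by
        intro s hs
        have hu0 : 0 < t - s := by linarith [hs.2]
        have hut : t - s ≤ t := by linarith [hs.1]
        have hne : t - s < t + 1 := by linarith
        have hD : HasDerivAt (fun u => σ u x) (W (σ (t - s) x)) (t - s) :=
          (hσd x (t+1) (by linarith) (t - s) ⟨hu0.le, hne.le⟩).hasDerivAt
            (Icc_mem_nhds hu0 hne)
        have hh : HasDerivAt (fun s : ℝ => t - s) (-1) s := (hasDerivAt_id s).const_sub t
        have := hD.scomp s hh
        simp only [neg_one_smul] at this
        exact this.hasDerivWithinAt)
      (fun u hu => (hσ'd (σ t x) t ht u hu).continuousWithinAt)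
      (fun s hs => hasDerivWithinAt_Ici_of_Icc hs.1 hs.2 (hσ'd (σ t x) t ht s ⟨hs.1, hs.2.le⟩))
      (by show σ (t - 0) x = σ' 0 (σ t x); rw [sub_zero, hσ'0])
    have h3 := key ⟨ht, le_rfl⟩
    simp only [sub_self] at h3
    rw [hσ0] at h3
    exact h3.symm

end FlowFacts

section LipHelpers

variable {E : Type*} [NormedAddCommGroup E] [NormedSpace ℝ E]
variable {F : Type*} [NormedAddCommGroup F] [NormedSpace ℝ F]

lemma LocallyLipschitz.smul_loc {f : E → ℝ} {g : E → F}
    (hf : LocallyLipschitz f) (hg : LocallyLipschitz g) :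
    LocallyLipschitz (fun x => f x • g x) := by
  have hsmul : LocallyLipschitz (fun p : ℝ × F => p.1 • p.2) := by
    have : ContDiff ℝ 1 (fun p : ℝ × F => p.1 • p.2) := contDiff_fst.smul contDiff_snd
    exact this.locallyLipschitz
  exact hsmul.comp (hf.prodMk hg)

lemma LocallyLipschitz.mul_loc {f g : E → ℝ}
    (hf : LocallyLipschitz f) (hg : LocallyLipschitz g) :
    LocallyLipschitz (fun x => f x * g x) :=
  hf.smul_loc hg

lemma LocallyLipschitz.inv_loc {f : E → ℝ} (hf : LocallyLipschitz f) (h0 : ∀ x, f x ≠ 0) :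
    LocallyLipschitz (fun x => (f x)⁻¹) := by
  intro x₀
  obtain ⟨K, t, ht, hK⟩ := hf x₀
  have hfx : 0 < |f x₀| := abs_pos.mpr (h0 x₀)
  set s' := {y : E | |f x₀|/2 < |f y|} with hs'def
  have hs'open : IsOpen s' := by
    have : s' = (fun y => |f y|) ⁻¹' (Ioi (|f x₀|/2)) := rfl
    rw [this]
    exact isOpen_Ioi.preimage (hf.continuous.abs)
  have hx₀s' : x₀ ∈ s' := by
    show |f x₀|/2 < |f x₀|
    linarith
  refine ⟨Real.toNNReal ((K:ℝ) * (2/|f x₀|)^2), t ∩ s',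
    inter_mem ht (hs'open.mem_nhds hx₀s'), LipschitzOnWith.of_dist_le' ?_⟩
  intro y hy z hz
  have hfy : |f x₀|/2 < |f y| := hy.2
  have hfz : |f x₀|/2 < |f z| := hz.2
  have hy0 : f y ≠ 0 := h0 y
  have hz0 : f z ≠ 0 := h0 z
  have heq : (f y)⁻¹ - (f z)⁻¹ = (f z - f y) / (f y * f z) := by
    field_simp
  rw [Real.dist_eq, heq, abs_div, abs_mul]
  have hnum : |f z - f y| ≤ (K:ℝ) * dist y z := by
    have := hK.dist_le_mul y hy.1 z hz.1
    rw [Real.dist_eq, abs_sub_comm] at this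
    exact this
  have hden : (|f x₀|/2) * (|f x₀|/2) ≤ |f y| * |f z| := by
    apply mul_le_mul hfy.le hfz.le (by positivity) (abs_nonneg _)
  have hden0 : (0:ℝ) < |f y| * |f z| := by positivity
  calc |f z - f y| / (|f y| * |f z|)
      ≤ ((K:ℝ) * dist y z) / ((|f x₀|/2) * (|f x₀|/2)) := by
        apply div_le_div₀ (by positivity) hnum (by positivity) hden
    _ = (K:ℝ) * (2/|f x₀|)^2 * dist y z := by
        field_simp
end LipHelpers

set_option maxHeartbeats 1000000 in
/-- Localized quantitative deformation lemma in a Banach space: given a `C¹` functional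
`Φ` whose gradient has norm at least `μ` on the localized slab
`N = {u ∈ U_{2δ} : c - η ≤ Φ(u) ≤ c + η}`, and a locally Lipschitz pseudogradient field
`V` for `Φ` on `N`, there is a continuous deformation `F` which is the identity at time
`0` and outside `N`, moves `{Φ ≤ c + η̄} ∩ U` into `{Φ ≤ c - η̄} ∩ U_δ` at time `1`,
and is a homeomorphism at each time. -/
theorem localized_deformation_lemma {E : Type*} [NormedAddCommGroup E]
    [NormedSpace ℝ E] [CompleteSpace E]
    (Φ : E → ℝ) (hΦ : ContDiff ℝ 1 Φ)
    (c δ μ η ηbar : ℝ)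
    (hδ : 0 < δ) (hμ0 : 0 < μ) (hμ1 : μ ≤ 1)
    (hηbar : 0 < ηbar) (hηbarη : ηbar < η) (hsmall : 8 * ηbar ≤ δ * μ ^ 2)
    (U : Set E) (hU : U.Nonempty)
    (N : Set E)
    (hN : N = {u : E | Metric.infDist u U ≤ 2 * δ ∧ c - η ≤ Φ u ∧ Φ u ≤ c + η})
    (hgrad : ∀ u ∈ N, μ ≤ ‖fderiv ℝ Φ u‖)
    (V : E → E) (hVlip : LocallyLipschitz V)
    (hV1 : ∀ u ∈ N, ‖V u‖ ≤ 2 * ‖fderiv ℝ Φ u‖)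
    (hV2 : ∀ u ∈ N, ‖fderiv ℝ Φ u‖ ^ 2 ≤ fderiv ℝ Φ u (V u)) :
    ∃ F : ℝ → E → E,
      Continuous (fun p : ℝ × E => F p.1 p.2) ∧
      (∀ u : E, F 0 u = u) ∧
      (∀ t ∈ Set.Icc (0 : ℝ) 1, ∀ u ∉ N, F t u = u) ∧
      (∀ u ∈ U, Φ u ≤ c + ηbar →
        Metric.infDist (F 1 u) U ≤ δ ∧ Φ (F 1 u) ≤ c - ηbar) ∧
      (∀ t ∈ Set.Icc (0 : ℝ) 1, IsHomeomorph (F t)) := by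
  classical
  by_cases hA : {v : E | Metric.infDist v U ≤ δ ∧ c - ηbar ≤ Φ v ∧ Φ v ≤ c + ηbar}.Nonempty
  case neg =>
    refine ⟨fun _ u => u, continuous_snd, fun u => rfl, fun t _ u _ => rfl, ?_, fun t _ => (Homeomorph.refl E).isHomeomorph⟩
    intro u hu hΦu
    have h1 : Metric.infDist u U = 0 := Metric.infDist_zero_of_mem hu
    refine ⟨by rw [h1]; exact hδ.le, ?_⟩
    by_contra hgt
    push_neg at hgt
    exact hA ⟨u, by rw [h1]; exact hδ.le, by linarith, hΦu⟩
  case pos =>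
  set A := {v : E | Metric.infDist v U ≤ δ ∧ c - ηbar ≤ Φ v ∧ Φ v ≤ c + ηbar} with hAdef
  have hΦcont : Continuous Φ := hΦ.continuous
  have hΦdiff : Differentiable ℝ Φ := hΦ.differentiable one_ne_zero
  have hNclosed : IsClosed N := by
    rw [hN]
    have heq : {u : E | Metric.infDist u U ≤ 2*δ ∧ c - η ≤ Φ u ∧ Φ u ≤ c + η} =
        ((fun u => Metric.infDist u U) ⁻¹' (Iic (2*δ))) ∩
        ((Φ ⁻¹' (Ici (c-η))) ∩ (Φ ⁻¹' (Iic (c+η)))) := rfl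
    rw [heq]
    exact (isClosed_Iic.preimage (Metric.continuous_infDist_pt U)).inter
      ((isClosed_Ici.preimage hΦcont).inter (isClosed_Iic.preimage hΦcont))
  have hAclosed : IsClosed A := by
    have heq : A = ((fun u => Metric.infDist u U) ⁻¹' (Iic δ)) ∩
        ((Φ ⁻¹' (Ici (c-ηbar))) ∩ (Φ ⁻¹' (Iic (c+ηbar)))) := rfl
    rw [heq]
    exact (isClosed_Iic.preimage (Metric.continuous_infDist_pt U)).inter
      ((isClosed_Ici.preimage hΦcont).inter (isClosed_Iic.preimage hΦcont))
  have hAsubN : A ⊆ N := by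
    intro u hu
    rw [hN]
    exact ⟨by linarith [hu.1], by linarith [hu.2.1], by linarith [hu.2.2]⟩
  -- the cutoff numerator
  set bfun : E → ℝ := if Nᶜ.Nonempty then (fun u => Metric.infDist u Nᶜ) else (fun _ => 1)
    with hbdef
  have hblip : LipschitzWith 1 bfun := by
    rw [hbdef]; split_ifs with h
    · exact Metric.lipschitz_infDist_pt _
    · exact (LipschitzWith.const 1).weaken (zero_le_one)
  have hbnonneg : ∀ u, 0 ≤ bfun u := by
    intro u; rw [hbdef]; split_ifs with h
    · exact Metric.infDist_nonneg
    · exact zero_le_one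
  have hbzero : ∀ u ∉ N, bfun u = 0 := by
    intro u hu
    rw [hbdef]
    split_ifs with h
    · exact Metric.infDist_zero_of_mem hu
    · exact absurd ⟨u, hu⟩ h
  have hbposA : ∀ u ∈ A, 0 < bfun u := by
    intro u hu
    rw [hbdef]
    split_ifs with h
    · -- find a ball around u inside N
      obtain ⟨ρ₂, hρ₂0, hρ₂⟩ := Metric.continuousAt_iff.mp hΦcont.continuousAt (η - ηbar)
        (by linarith)
      set ρ := min δ ρ₂ with hρdef
      have hρ0 : 0 < ρ := lt_min hδ hρ₂0
      have hball : Metric.ball u ρ ⊆ N := by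
        intro v hv
        rw [mem_ball] at hv
        rw [hN]
        have h1 : Metric.infDist v U ≤ Metric.infDist u U + dist v u :=
          Metric.infDist_le_infDist_add_dist
        have h2 : dist v u < δ := lt_of_lt_of_le hv (min_le_left _ _)
        have h3 : dist (Φ v) (Φ u) < η - ηbar := hρ₂ (lt_of_lt_of_le hv (min_le_right _ _))
        rw [Real.dist_eq, abs_lt] at h3
        refine ⟨by linarith [hu.1], by linarith [hu.2.1, h3.1], by linarith [hu.2.2, h3.2]⟩
      by_contra hle
      push_neg at hle
      obtain ⟨y, hyNc, hy⟩ := (Metric.infDist_lt_iff h).mp (lt_of_le_of_lt hle hρ0)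
      exact hyNc (hball (mem_ball.mpr (by rwa [dist_comm])))
    · exact one_pos
  -- the cutoff denominator
  set afun : E → ℝ := fun u => Metric.infDist u A with hadef
  have hanonneg : ∀ u, 0 ≤ afun u := fun u => Metric.infDist_nonneg
  have haA : ∀ u ∈ A, afun u = 0 := fun u hu => Metric.infDist_zero_of_mem hu
  have haposA : ∀ u ∉ A, 0 < afun u := fun u hu =>
    (hAclosed.notMem_iff_infDist_pos hA).mp hu
  set p : E → ℝ := fun u => afun u + bfun u with hpdef
  have hppos : ∀ u, 0 < p u := by
    intro u
    by_cases hu : u ∈ A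
    · have := hbposA u hu
      have := hanonneg u
      rw [hpdef]; dsimp only; linarith
    · have := haposA u hu
      have := hbnonneg u
      rw [hpdef]; dsimp only; linarith
  set χ : E → ℝ := fun u => bfun u / p u with hχdef
  have hχ0 : ∀ u, 0 ≤ χ u := fun u => div_nonneg (hbnonneg u) (hppos u).le
  have hχ1 : ∀ u, χ u ≤ 1 := by
    intro u
    rw [hχdef]
    apply div_le_one_of_le₀
    · rw [hpdef]; dsimp only; linarith [hanonneg u]
    · exact (hppos u).le
  have hχA : ∀ u ∈ A, χ u = 1 := by
    intro u hu
    rw [hχdef]; dsimp only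
    rw [hpdef]; dsimp only
    rw [haA u hu, zero_add]
    exact div_self (hbposA u hu).ne'
  have hχN : ∀ u ∉ N, χ u = 0 := by
    intro u hu
    rw [hχdef]; dsimp only
    rw [hbzero u hu, zero_div]
  have hχlip : LocallyLipschitz χ := by
    have h1 : LocallyLipschitz bfun := hblip.locallyLipschitz
    have h2 : LocallyLipschitz afun := (Metric.lipschitz_infDist_pt A).locallyLipschitz
    have h3 : LocallyLipschitz p := by
      have := h2.add h1
      exact this
    have h4 : LocallyLipschitz (fun u => (p u)⁻¹) := h3.inv_loc (fun u => (hppos u).ne')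
    have h5 := h1.mul_loc h4
    have : χ = fun u => bfun u * (p u)⁻¹ := by
      funext u
      simp only [hχdef]
      rw [div_eq_mul_inv]
    rw [this]
    exact h5
  -- lower bound for ‖V‖ on N
  have hVlow : ∀ u ∈ N, μ ≤ ‖V u‖ := by
    intro u huN
    have hD := hgrad u huN
    have h1 : ‖fderiv ℝ Φ u‖^2 ≤ fderiv ℝ Φ u (V u) := hV2 u huN
    have h2 : fderiv ℝ Φ u (V u) ≤ ‖fderiv ℝ Φ u‖ * ‖V u‖ := by
      have := (fderiv ℝ Φ u).le_opNorm (V u)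
      rw [Real.norm_eq_abs] at this
      exact (le_abs_self _).trans this
    have h3 : 0 < ‖fderiv ℝ Φ u‖ := lt_of_lt_of_le hμ0 hD
    have h4 : ‖fderiv ℝ Φ u‖ ≤ ‖V u‖ := by nlinarith
    linarith
  -- regularized squared norm
  set q' : E → ℝ := fun u => max (‖V u‖^2) (μ^2/2) with hq'def
  have hq'pos : ∀ u, 0 < q' u := fun u =>
    lt_of_lt_of_le (by positivity) (le_max_right _ _)
  have hq'N : ∀ u ∈ N, q' u = ‖V u‖^2 := by
    intro u huN
    apply max_eq_left
    have := hVlow u huN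
    nlinarith
  have hq'lip : LocallyLipschitz q' := by
    have h1 : LocallyLipschitz (fun u => ‖V u‖) :=
      LocallyLipschitz.comp (lipschitzWith_one_norm.locallyLipschitz) hVlip
    have h2 : LocallyLipschitz (fun u => ‖V u‖ * ‖V u‖) := h1.mul_loc h1
    have h3 : LocallyLipschitz (fun u => ‖V u‖^2) := by
      have : (fun u => ‖V u‖^2) = fun u => ‖V u‖ * ‖V u‖ := by
        funext u; ring
      rw [this]; exact h2
    exact h3.max_const _
  -- the vector field
  set W : E → E := fun u => -((χ u / q' u) • V u) with hWdef
  have hWlip : LocallyLipschitz W := by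
    have h1 : LocallyLipschitz (fun u => (q' u)⁻¹) := hq'lip.inv_loc (fun u => (hq'pos u).ne')
    have h2 : LocallyLipschitz (fun u => χ u * (q' u)⁻¹) := hχlip.mul_loc h1
    have h3 : LocallyLipschitz (fun u => (χ u * (q' u)⁻¹) • V u) := h2.smul_loc hVlip
    have : W = fun u => -((χ u * (q' u)⁻¹) • V u) := by
      funext u; rw [hWdef]; dsimp only; rw [div_eq_mul_inv]
    rw [this]
    exact h3.neg
  have hWzero : ∀ u ∉ N, W u = 0 := by
    intro u hu
    rw [hWdef]; dsimp only
    rw [hχN u hu, zero_div, zero_smul, neg_zero]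
  set M : ℝ := 1/μ with hMdef
  have hM0 : 0 < M := by positivity
  have hWbound : ∀ u, ‖W u‖ ≤ M := by
    intro u
    by_cases huN : u ∈ N
    · rw [hWdef]; dsimp only
      rw [norm_neg, norm_smul, Real.norm_eq_abs]
      have hV0 : 0 < ‖V u‖ := lt_of_lt_of_le hμ0 (hVlow u huN)
      rw [hq'N u huN]
      rw [abs_of_nonneg (div_nonneg (hχ0 u) (by positivity))]
      have heq : χ u / ‖V u‖^2 * ‖V u‖ = χ u / ‖V u‖ := by
        field_simp
      rw [heq]
      calc χ u / ‖V u‖ ≤ 1 / ‖V u‖ := by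
            gcongr
            exact hχ1 u
        _ ≤ 1 / μ := one_div_le_one_div_of_le hμ0 (hVlow u huN)
        _ = M := hMdef.symm
    · rw [hWzero u huN, norm_zero]
      exact hM0.le
  -- the two flows
  obtain ⟨σ, hσ0, hσd, hσc⟩ := exists_flow hWlip hM0 hWbound
  obtain ⟨σ', hσ'0, hσ'd, hσ'c⟩ := exists_flow (W := fun u => -W u) hWlip.neg hM0
    (fun x => by rw [norm_neg]; exact hWbound x)
  set T : ℝ := δ * μ with hTdef
  have hT0 : 0 < T := by positivity
  have hstat : ∀ u ∉ N, ∀ t : ℝ, 0 ≤ t → σ t u = u :=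
    fun u hu t ht => flow_const hWlip hσ0 hσd (hWzero u hu) ht
  have hinv1 : ∀ t : ℝ, 0 ≤ t → ∀ x, σ' t (σ t x) = x :=
    fun t ht x => flow_inverse hWlip hσ0 hσd hσ'0 hσ'd x ht
  have hinv2 : ∀ t : ℝ, 0 ≤ t → ∀ x, σ t (σ' t x) = x := by
    intro t ht x
    have hσd2 : ∀ x, ∀ T, 0 ≤ T → ∀ t ∈ Icc (0:ℝ) T,
        HasDerivWithinAt (fun s => σ s x) (-(fun u => -W u) (σ t x)) (Icc (0:ℝ) T) t := by
      intro x T hT t htm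
      simpa [neg_neg] using hσd x T hT t htm
    exact flow_inverse (W := fun u => -W u) hWlip.neg hσ'0 hσ'd hσ0 hσd2 x ht
  -- the key decrease property
  have hkey : ∀ x, x ∈ U → Φ x ≤ c + ηbar →
      Metric.infDist (σ T x) U ≤ δ ∧ Φ (σ T x) ≤ c - ηbar := by
    intro x hxU hxΦ
    have hdist : ∀ s ∈ Icc (0:ℝ) T, Metric.infDist (σ s x) U ≤ δ := by
      intro s hs
      have h1 : ‖σ s x - σ 0 x‖ ≤ M * |s - 0| :=
        sol_lip hWbound (hσd x T hT0.le) ⟨le_rfl, hT0.le⟩ hs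
      rw [hσ0, sub_zero] at h1
      have h2 : M * |s| ≤ M * T := by
        apply mul_le_mul_of_nonneg_left _ hM0.le
        rw [abs_of_nonneg hs.1]; exact hs.2
      have h3 : M * T = δ := by
        rw [hMdef, hTdef]; field_simp
      have h4 : Metric.infDist (σ s x) U ≤ Metric.infDist x U + dist (σ s x) x :=
        Metric.infDist_le_infDist_add_dist
      rw [Metric.infDist_zero_of_mem hxU, zero_add, dist_eq_norm] at h4
      linarith
    refine ⟨hdist T ⟨hT0.le, le_rfl⟩, ?_⟩
    set φ : ℝ → ℝ := fun s => Φ (σ s x) with hφdef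
    set φ' : ℝ → ℝ := fun s => (fderiv ℝ Φ (σ s x)) (W (σ s x)) with hφ'def
    have hφd : ∀ s ∈ Icc (0:ℝ) T, HasDerivWithinAt φ (φ' s) (Icc (0:ℝ) T) s := by
      intro s hs
      exact (hΦdiff (σ s x)).hasFDerivAt.comp_hasDerivWithinAt s (hσd x T hT0.le s hs)
    have hφc : ContinuousOn φ (Icc 0 T) := fun s hs => (hφd s hs).continuousWithinAt
    have hform : ∀ u : E, (fderiv ℝ Φ u) (W u) = -((χ u / q' u) * (fderiv ℝ Φ u (V u))) := by
      intro u
      rw [hWdef]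
      simp only [map_neg, map_smul, smul_eq_mul]
    have hderiv_le : ∀ u : E, (fderiv ℝ Φ u) (W u) ≤ 0 := by
      intro u
      rw [hform u]
      by_cases huN : u ∈ N
      · have h1 : (0:ℝ) ≤ fderiv ℝ Φ u (V u) := le_trans (sq_nonneg _) (hV2 u huN)
        have h2 : 0 ≤ (χ u / q' u) * (fderiv ℝ Φ u (V u)) :=
          mul_nonneg (div_nonneg (hχ0 u) (hq'pos u).le) h1
        linarith
      · rw [hχN u huN]
        simp
    have hderiv_A : ∀ u ∈ A, (fderiv ℝ Φ u) (W u) ≤ -(1/4) := by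
      intro u huA
      have huN : u ∈ N := hAsubN huA
      rw [hform u, hχA u huA, hq'N u huN]
      have h1 := hV2 u huN
      have h2 := hV1 u huN
      have h3 : 0 < ‖V u‖ := lt_of_lt_of_le hμ0 (hVlow u huN)
      have h4 : ‖V u‖^2 ≤ 4 * ‖fderiv ℝ Φ u‖^2 := by
        nlinarith [norm_nonneg (fderiv ℝ Φ u)]
      have h5 : (1:ℝ)/4 ≤ 1 / ‖V u‖^2 * (fderiv ℝ Φ u (V u)) := by
        rw [div_mul_eq_mul_div, le_div_iff₀ (by positivity)]
        nlinarith
      linarith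
    have hmono : AntitoneOn φ (Icc 0 T) := by
      apply antitoneOn_of_hasDerivWithinAt_nonpos (convex_Icc 0 T) hφc
        (fun s hs => ((hφd s (interior_subset hs)).mono interior_subset))
        (fun s hs => hderiv_le (σ s x))
    by_contra hbad
    push_neg at hbad
    have hφT : c - ηbar < φ T := hbad
    have hφ0 : φ 0 ≤ c + ηbar := by
      simp only [hφdef]; rw [hσ0]; exact hxΦ
    have hmemA : ∀ s ∈ Icc (0:ℝ) T, σ s x ∈ A := by
      intro s hs
      refine ⟨hdist s hs, ?_, ?_⟩
      · have := hmono hs ⟨hT0.le, le_rfl⟩ hs.2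
        show c - ηbar ≤ Φ (σ s x)
        have h7 : φ s = Φ (σ s x) := rfl
        linarith [hφT, this]
      · have := hmono ⟨le_rfl, hT0.le⟩ hs hs.1
        show Φ (σ s x) ≤ c + ηbar
        have h7 : φ s = Φ (σ s x) := rfl
        linarith [hφ0, this]
    set ψ : ℝ → ℝ := fun s => φ s + s * (1/4) with hψdef
    have hψmono : AntitoneOn ψ (Icc 0 T) := by
      apply antitoneOn_of_hasDerivWithinAt_nonpos (convex_Icc 0 T)
        (f' := fun s => φ' s + 1 * (1/4))
        (hφc.add (continuousOn_id.mul continuousOn_const))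
        (fun s hs => (((hφd s (interior_subset hs)).mono interior_subset).add
          ((hasDerivWithinAt_id s _).mul_const (1/4))))
        ?_
      intro s hs
      have h1 : σ s x ∈ A := hmemA s (interior_subset hs)
      have h2 := hderiv_A (σ s x) h1
      have h7 : φ' s = (fderiv ℝ Φ (σ s x)) (W (σ s x)) := rfl
      linarith
    have hfinal := hψmono ⟨le_rfl, hT0.le⟩ ⟨hT0.le, le_rfl⟩ hT0.le
    simp only [hψdef] at hfinal
    have hT4 : 2 * ηbar ≤ T / 4 := by
      have h8 : δ * μ^2 ≤ δ * μ := by nlinarith [hδ.le, hμ0.le, hμ1]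
      rw [hTdef]
      linarith
    linarith [hfinal, hφT, hφ0, hT4]
  -- assemble the deformation
  refine ⟨fun t u => σ (T * max 0 (min t 1)) u, ?_, ?_, ?_, ?_, ?_⟩
  · have hclamp : Continuous (fun t : ℝ => T * max 0 (min t 1)) :=
      continuous_const.mul (continuous_const.max (continuous_id.min continuous_const))
    have hmap : Continuous (fun p : ℝ × E => ((T * max 0 (min p.1 1), p.2) : ℝ × E)) :=
      (hclamp.comp continuous_fst).prodMk continuous_snd
    have hmem : ∀ p : ℝ × E, ((T * max 0 (min p.1 1), p.2) : ℝ × E) ∈ Ici (0:ℝ) ×ˢ univ :=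
      fun p => ⟨mul_nonneg hT0.le (le_max_left _ _), trivial⟩
    exact hσc.comp_continuous hmap hmem
  · intro u
    show σ (T * max 0 (min (0:ℝ) 1)) u = u
    rw [min_eq_left zero_le_one, max_self, mul_zero]
    exact hσ0 u
  · intro t _ u hu
    show σ (T * max 0 (min t 1)) u = u
    exact hstat u hu _ (mul_nonneg hT0.le (le_max_left _ _))
  · intro u huU hΦu
    show Metric.infDist (σ (T * max 0 (min (1:ℝ) 1)) u) U ≤ δ ∧
      Φ (σ (T * max 0 (min (1:ℝ) 1)) u) ≤ c - ηbar
    rw [min_self, max_eq_right zero_le_one, mul_one]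
    exact hkey u huU hΦu
  · intro t _
    show IsHomeomorph (fun u => σ (T * max 0 (min t 1)) u)
    set s := T * max 0 (min t 1) with hsdef
    have hs0 : 0 ≤ s := mul_nonneg hT0.le (le_max_left _ _)
    rw [isHomeomorph_iff_exists_inverse]
    refine ⟨?_, σ' s, fun x => hinv1 s hs0 x, fun x => hinv2 s hs0 x, ?_⟩
    · exact hσc.comp_continuous (continuous_const.prodMk continuous_id)
        (fun x => ⟨hs0, trivial⟩)
    · exact hσ'c.comp_continuous (continuous_const.prodMk continuous_id)
        (fun x => ⟨hs0, trivial⟩)
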